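/- Unbiasedness of COALA-PG in the batched setting: consider B parallel trajectories where rewards in the current inner episode of trajectory b depend only on trajectory b's own actions, while rewards in later inner episodes may depend on all B trajectories (through a parameter update at episode boundaries). Then E[Σ_b Σ_l ∇_θ log π_θ(a_l^b | h_l^b) · ((1/B) Σ_{l'≥l, l'≤ m_l T} r_{l'}^b + (1/B) Σ_{b'} Σ_{l' > m_l T} r_{l'}^{b'})] equals E[Σ_b Σ_l ∇_θ log π_θ(a_l^b | h_l^b) · (1/B) Σ_{b'} Σ_{l'≥l} r_{l'}^{b'}], i.e., dropping the cross-trajectory reward terms within the current inner episode does not change the expectation. -/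

import Mathlib

open Finset

set_option maxHeartbeats 1600000

/-- Nested update of a curried two-argument function. -/
def updB {ι κ X : Type*} [DecidableEq ι] [DecidableEq κ]
    (ω : ι → κ → X) (c : ι) (j : κ) (x : X) : ι → κ → X :=
  Function.update ω c (Function.update (ω c) j x)

lemma updB_same {ι κ X : Type*} [DecidableEq ι] [DecidableEq κ]
    (ω : ι → κ → X) (c : ι) (j : κ) (x : X) : updB ω c j x c j = x := by
  simp [updB]

lemma updB_ne {ι κ X : Type*} [DecidableEq ι] [DecidableEq κ]
    (ω : ι → κ → X) (c : ι) (j : κ) (x : X) (c' : ι) (j' : κ)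
    (h : (c', j') ≠ (c, j)) : updB ω c j x c' j' = ω c' j' := by
  by_cases hc : c' = c
  · subst hc
    have hj : j' ≠ j := by rintro rfl; exact h rfl
    simp [updB, Function.update_of_ne hj]
  · simp [updB, Function.update_of_ne hc]

lemma sum_updB_fiber {ι κ X : Type*} [Fintype ι] [Fintype κ] [Fintype X]
    [DecidableEq ι] [DecidableEq κ] {E : Type*} [AddCommMonoid E]
    (c : ι) (j : κ) (f : (ι → κ → X) → E) :
    ∑ ω : ι → κ → X, ∑ x : X, f (updB ω c j x)
      = Fintype.card X • ∑ ω : ι → κ → X, f ω := by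
  classical
  have hinv : Function.Involutive (fun p : (ι → κ → X) × X =>
      (updB p.1 c j p.2, p.1 c j)) := by
    rintro ⟨ω, x⟩
    simp only [Prod.mk.injEq]
    constructor
    · funext c'
      by_cases hc : c' = c
      · subst hc
        simp only [updB, Function.update_self]
        funext j'
        by_cases hj : j' = j
        · subst hj; simp
        · simp [Function.update_of_ne hj]
      · simp [updB, Function.update_of_ne hc]
    · simp [updB]
  have h1 : ∑ ω : ι → κ → X, ∑ x : X, f (updB ω c j x)
      = ∑ p : (ι → κ → X) × X, f ((hinv.toPerm _ p).1) := by
    rw [Fintype.sum_prod_type]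
    rfl
  rw [h1, Equiv.sum_comp (hinv.toPerm _) (fun p => f p.1)]
  rw [Fintype.sum_prod_type]
  simp [Finset.sum_const]
  rw [← Finset.smul_sum]

lemma score_zero {d : ℕ} {Act H : Type*} [Fintype Act]
    (π : (Fin d → ℝ) → Act → H → ℝ)
    (hπpos : ∀ θ a h, 0 < π θ a h)
    (hπdiff : ∀ a h, Differentiable ℝ (fun θ => π θ a h))
    (hπsum : ∀ θ h, ∑ a : Act, π θ a h = 1)
    (θ : Fin d → ℝ) (h : H) :
    ∑ a : Act, π θ a h • fderiv ℝ (fun θ' => Real.log (π θ' a h)) θ = 0 := by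
  have hfd : ∀ a : Act, HasFDerivAt (fun θ' => π θ' a h)
      (fderiv ℝ (fun θ' => π θ' a h) θ) θ := fun a => ((hπdiff a h) θ).hasFDerivAt
  have hlog : ∀ a : Act, fderiv ℝ (fun θ' => Real.log (π θ' a h)) θ
      = (π θ a h)⁻¹ • fderiv ℝ (fun θ' => π θ' a h) θ := fun a =>
    ((hfd a).log (ne_of_gt (hπpos θ a h))).fderiv
  have hsum : HasFDerivAt (fun θ' => ∑ a : Act, π θ' a h)
      (∑ a : Act, fderiv ℝ (fun θ' => π θ' a h) θ) θ :=
    HasFDerivAt.fun_sum (fun a _ => hfd a)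
  have hconst : (fun θ' : Fin d → ℝ => ∑ a : Act, π θ' a h) = fun _ => (1:ℝ) :=
    funext fun θ' => hπsum θ' h
  rw [hconst] at hsum
  have hz : (∑ a : Act, fderiv ℝ (fun θ' => π θ' a h) θ) = 0 :=
    hsum.unique (hasFDerivAt_const 1 θ)
  calc ∑ a : Act, π θ a h • fderiv ℝ (fun θ' => Real.log (π θ' a h)) θ
      = ∑ a : Act, fderiv ℝ (fun θ' => π θ' a h) θ := by
        refine Finset.sum_congr rfl fun a _ => ?_
        rw [hlog a, smul_smul, mul_inv_cancel₀ (ne_of_gt (hπpos θ a h)), one_smul]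
    _ = 0 := hz

lemma coala_core {Act Obs : Type*} [Fintype Act] [Fintype Obs] {d B M T : ℕ}
    [Nonempty Act] [Nonempty Obs]
    (hT : 1 ≤ T)
    (hist : Fin B → Fin (M * T) → (Fin B → Fin (M * T) → Act × Obs) →
      (Fin (M * T) → Option (Act × Obs)))
    (hhist : ∀ b l ω ω', (∀ l' : Fin (M * T), l' < l → ω b l' = ω' b l') →
      hist b l ω = hist b l ω')
    (π : (Fin d → ℝ) → Act → (Fin (M * T) → Option (Act × Obs)) → ℝ)
    (hπpos : ∀ θ a h, 0 < π θ a h)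
    (hπdiff : ∀ a h, Differentiable ℝ (fun θ => π θ a h))
    (hπsum : ∀ θ h, ∑ a : Act, π θ a h = 1)
    (e : Fin B → Fin (M * T) → (Fin B → Fin (M * T) → Act × Obs) → ℝ)
    (he_dep : ∀ b l ω ω',
      (∀ l' : Fin (M * T), l' ≤ l → ω b l' = ω' b l') →
      (∀ (b' : Fin B) (l' : Fin (M * T)), l'.val / T < l.val / T → ω b' l' = ω' b' l') →
      e b l ω = e b l ω')
    (he_sum : ∀ b l (ω : Fin B → Fin (M * T) → Act × Obs), ∑ o : Obs,
      e b l (Function.update ω b (Function.update (ω b) l ((ω b l).1, o))) = 1)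
    (r : Fin B → Fin (M * T) → (Fin B → Fin (M * T) → Act × Obs) → ℝ)
    (hr_dep : ∀ b l ω ω',
      (∀ l' : Fin (M * T), l' ≤ l → ω b l' = ω' b l') →
      (∀ (b' : Fin B) (l' : Fin (M * T)), l'.val / T < l.val / T → ω b' l' = ω' b' l') →
      r b l ω = r b l ω')
    (θ : Fin d → ℝ) (b b' : Fin B) (l l' : Fin (M * T))
    (hb' : b' ≠ b) (hll' : l ≤ l') (hep : l'.val / T = l.val / T) :
    ∑ ω : Fin B → Fin (M * T) → Act × Obs,
      ((∏ bb, ∏ ll, π θ ((ω bb ll).1) (hist bb ll ω) * e bb ll ω) * r b' l' ω) •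
        fderiv ℝ (fun θ' => Real.log (π θ' ((ω b l).1) (hist b l ω))) θ = 0 := by
  classical
  have hT0 : 0 < T := hT
  set ρ : Fin B × Fin (M * T) → ℕ := fun p =>
    (p.2.val / T) * ((B + 1) * T) + (if p.1 = b then B else p.1.val) * T + p.2.val % T
    with hρdef
  set F : Fin B × Fin (M * T) → (Fin B → Fin (M * T) → Act × Obs) → ℝ := fun p ω =>
    π θ ((ω p.1 p.2).1) (hist p.1 p.2 ω) * e p.1 p.2 ω with hFdef
  set G : (Fin B → Fin (M * T) → Act × Obs) → ((Fin d → ℝ) →L[ℝ] ℝ) := fun ω =>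
    r b' l' ω • fderiv ℝ (fun θ' => Real.log (π θ' ((ω b l).1) (hist b l ω))) θ with hGdef
  -- basic ρ facts
  have hrank_le : ∀ c : Fin B, (if c = b then B else c.val) ≤ B := by
    intro c
    rcases eq_or_ne c b with h | h
    · rw [if_pos h]
    · rw [if_neg h]; exact le_of_lt c.isLt
  have hρe : ∀ (c c' : Fin B) (j j' : Fin (M * T)),
      j'.val / T < j.val / T → ρ (c', j') < ρ (c, j) := by
    intro c c' j j' hlt
    simp only [hρdef]
    have h1 : (if c' = b then B else c'.val) * T + j'.val % T < (B + 1) * T := by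
      have h2 : j'.val % T < T := Nat.mod_lt _ hT0
      calc (if c' = b then B else c'.val) * T + j'.val % T
          < (if c' = b then B else c'.val) * T + T := Nat.add_lt_add_left h2 _
        _ = ((if c' = b then B else c'.val) + 1) * T := by ring
        _ ≤ (B + 1) * T := Nat.mul_le_mul_right _ (by have := hrank_le c'; omega)
    calc j'.val / T * ((B + 1) * T) + (if c' = b then B else c'.val) * T + j'.val % T
        = j'.val / T * ((B + 1) * T) + ((if c' = b then B else c'.val) * T + j'.val % T) := by
          ring
      _ < j'.val / T * ((B + 1) * T) + (B + 1) * T := Nat.add_lt_add_left h1 _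
      _ = (j'.val / T + 1) * ((B + 1) * T) := by ring
      _ ≤ j.val / T * ((B + 1) * T) := Nat.mul_le_mul_right _ hlt
      _ ≤ j.val / T * ((B + 1) * T) + (if c = b then B else c.val) * T + j.val % T := by
          exact le_trans (Nat.le_add_right _ _) (Nat.le_add_right _ _)
  have hρown_lt : ∀ (c : Fin B) (j' j : Fin (M * T)), j' < j → ρ (c, j') < ρ (c, j) := by
    intro c j' j hlt'
    have hlt : j'.val < j.val := hlt'
    rcases Nat.lt_or_ge (j'.val / T) (j.val / T) with h | h
    · exact hρe c c j j' h
    · have hdiv : j'.val / T = j.val / T :=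
        le_antisymm (Nat.div_le_div_right (le_of_lt hlt)) h
      have hmo : j'.val % T < j.val % T := by
        have e1 := Nat.div_add_mod j'.val T
        have e2 := Nat.div_add_mod j.val T
        rw [hdiv] at e1
        obtain ⟨X, hX⟩ : ∃ X, T * (j.val / T) = X := ⟨_, rfl⟩
        rw [hX] at e1 e2
        omega
      simp only [hρdef]
      rw [hdiv]
      exact Nat.add_lt_add_left hmo _
  have hρown_le : ∀ (c : Fin B) (j' j : Fin (M * T)), j' ≤ j → ρ (c, j') ≤ ρ (c, j) := by
    intro c j' j hle
    rcases eq_or_lt_of_le hle with h | h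
    · have : j' = j := Fin.ext (by exact_mod_cast congrArg Fin.val h)
      rw [this]
    · exact le_of_lt (hρown_lt c j' j h)
  have hρinj : ∀ p q : Fin B × Fin (M * T), ρ p = ρ q → p = q := by
    rintro ⟨c, j⟩ ⟨c', j'⟩ hpq
    have hdiv : j.val / T = j'.val / T := by
      rcases Nat.lt_trichotomy (j.val / T) (j'.val / T) with h | h | h
      · exact absurd (hρe c' c j' j h) (by omega)
      · exact h
      · exact absurd (hρe c c' j j' h) (by omega)
    simp only [hρdef] at hpq
    rw [hdiv] at hpq
    rw [add_assoc, add_assoc] at hpq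
    have heq2 : (if c = b then B else c.val) * T + j.val % T
        = (if c' = b then B else c'.val) * T + j'.val % T := Nat.add_left_cancel hpq
    have hmod : j.val % T < T := Nat.mod_lt _ hT0
    have hmod' : j'.val % T < T := Nat.mod_lt _ hT0
    have hrk : (if c = b then B else c.val) = (if c' = b then B else c'.val) := by
      have h1 : ((if c = b then B else c.val) * T + j.val % T) / T
          = (if c = b then B else c.val) := by
        rw [mul_comm, Nat.mul_add_div hT0, Nat.div_eq_of_lt hmod, Nat.add_zero]
      have h2 : ((if c' = b then B else c'.val) * T + j'.val % T) / T
          = (if c' = b then B else c'.val) := by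
        rw [mul_comm, Nat.mul_add_div hT0, Nat.div_eq_of_lt hmod', Nat.add_zero]
      rw [← h1, ← h2, heq2]
    have hm : j.val % T = j'.val % T := by
      rw [hrk] at heq2
      exact Nat.add_left_cancel heq2
    have hcc : c = c' := by
      rcases eq_or_ne c b with h1 | h1 <;> rcases eq_or_ne c' b with h2 | h2
      · rw [h1, h2]
      · rw [if_pos h1, if_neg h2] at hrk
        exact absurd hrk.symm (Nat.ne_of_lt c'.isLt)
      · rw [if_neg h1, if_pos h2] at hrk
        exact absurd hrk (Nat.ne_of_lt c.isLt)
      · rw [if_neg h1, if_neg h2] at hrk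
        exact Fin.ext hrk
    have hjj : j = j' := by
      have e1 := Nat.div_add_mod j.val T
      have e2 := Nat.div_add_mod j'.val T
      rw [hdiv, hm] at e1
      exact Fin.ext (e1.symm.trans e2)
    rw [hcc, hjj]
  -- invariance lemmas
  have hupd_ne_of_rho : ∀ (c : Fin B) (j : Fin (M * T)) (ω : Fin B → Fin (M * T) → Act × Obs)
      (x : Act × Obs) (c' : Fin B) (j' : Fin (M * T)), ρ (c', j') < ρ (c, j) →
      updB ω c j x c' j' = ω c' j' := by
    intro c j ω x c' j' hlt
    refine updB_ne ω c j x c' j' ?_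
    intro hcontra
    rw [hcontra] at hlt
    exact lt_irrefl _ hlt
  have hF_inv : ∀ (p : Fin B × Fin (M * T)) (c : Fin B) (j : Fin (M * T)) ω x,
      ρ p < ρ (c, j) → F p (updB ω c j x) = F p ω := by
    rintro ⟨pc, pj⟩ c j ω x hlt
    simp only [hFdef]
    have h1 : updB ω c j x pc pj = ω pc pj := hupd_ne_of_rho c j ω x pc pj hlt
    have h2 : hist pc pj (updB ω c j x) = hist pc pj ω := by
      refine hhist pc pj _ _ (fun j' hj' => ?_)
      exact hupd_ne_of_rho c j ω x pc j' (lt_trans (hρown_lt pc j' pj hj') hlt)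
    have h3 : e pc pj (updB ω c j x) = e pc pj ω := by
      refine he_dep pc pj _ _ (fun j' hj' => ?_) (fun c'' j'' hj'' => ?_)
      · exact hupd_ne_of_rho c j ω x pc j' (lt_of_le_of_lt (hρown_le pc j' pj hj') hlt)
      · exact hupd_ne_of_rho c j ω x c'' j'' (lt_trans (hρe pc c'' pj j'' hj'') hlt)
    rw [h1, h2, h3]
  have hhist_inv : ∀ (c : Fin B) (j : Fin (M * T)) ω x, ρ (b, l) ≤ ρ (c, j) →
      hist b l (updB ω c j x) = hist b l ω := by
    intro c j ω x hle
    refine hhist b l _ _ (fun j' hj' => ?_)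
    exact hupd_ne_of_rho c j ω x b j' (lt_of_lt_of_le (hρown_lt b j' l hj') hle)
  have hρr : ∀ j'' : Fin (M * T), j'' ≤ l' → ρ (b', j'') < ρ (b, l) := by
    intro j'' hj
    have hd : j''.val / T ≤ l.val / T := by
      rw [← hep]; exact Nat.div_le_div_right (Fin.le_def.mp hj)
    rcases lt_or_eq_of_le hd with hlt | heq2
    · exact hρe b b' l j'' hlt
    · simp only [hρdef]
      rw [if_neg hb']
      simp only [eq_self_iff_true, if_true]
      rw [heq2]
      have h1 : b'.val * T + j''.val % T < B * T := by
        have hb1 : b'.val + 1 ≤ B := b'.isLt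
        have h2 : j''.val % T < T := Nat.mod_lt _ hT0
        calc b'.val * T + j''.val % T < b'.val * T + T := Nat.add_lt_add_left h2 _
          _ = (b'.val + 1) * T := by ring
          _ ≤ B * T := Nat.mul_le_mul_right _ hb1
      calc l.val / T * ((B + 1) * T) + b'.val * T + j''.val % T
          = l.val / T * ((B + 1) * T) + (b'.val * T + j''.val % T) := by ring
        _ < l.val / T * ((B + 1) * T) + B * T := Nat.add_lt_add_left h1 _
        _ ≤ l.val / T * ((B + 1) * T) + B * T + l.val % T := Nat.le_add_right _ _
  have hr_inv : ∀ (c : Fin B) (j : Fin (M * T)) ω x, ρ (b, l) ≤ ρ (c, j) →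
      r b' l' (updB ω c j x) = r b' l' ω := by
    intro c j ω x hle
    refine hr_dep b' l' _ _ (fun j'' hj'' => ?_) (fun c'' j'' hj'' => ?_)
    · exact hupd_ne_of_rho c j ω x b' j'' (lt_of_lt_of_le (hρr j'' hj'') hle)
    · have hj2 : j''.val / T < l.val / T := by rw [← hep]; exact hj''
      exact hupd_ne_of_rho c j ω x c'' j'' (lt_of_lt_of_le (hρe b c'' l j'' hj2) hle)
  have hG_inv : ∀ (c : Fin B) (j : Fin (M * T)) ω x, ρ (b, l) < ρ (c, j) →
      G (updB ω c j x) = G ω := by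
    intro c j ω x hlt
    simp only [hGdef]
    rw [hr_inv c j ω x (le_of_lt hlt), hhist_inv c j ω x (le_of_lt hlt),
      hupd_ne_of_rho c j ω x b l hlt]
  -- summing out a single coordinate of e
  have he_sum' : ∀ (c : Fin B) (j : Fin (M * T)) (ω : Fin B → Fin (M * T) → Act × Obs)
      (a : Act), ∑ o : Obs, e c j (updB ω c j (a, o)) = 1 := by
    intro c j ω a
    obtain ⟨o₀⟩ : Nonempty Obs := inferInstance
    have h2 := he_sum c j (updB ω c j (a, o₀))
    have h3 : ∀ o : Obs,
        Function.update (updB ω c j (a, o₀)) c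
          (Function.update ((updB ω c j (a, o₀)) c) j (((updB ω c j (a, o₀)) c j).1, o))
        = updB ω c j (a, o) := by
      intro o
      simp only [updB, Function.update_self, Function.update_idem]
    calc ∑ o : Obs, e c j (updB ω c j (a, o))
        = ∑ o : Obs, e c j (Function.update (updB ω c j (a, o₀)) c
            (Function.update ((updB ω c j (a, o₀)) c) j (((updB ω c j (a, o₀)) c j).1, o))) := by
          exact Finset.sum_congr rfl fun o _ => by rw [h3 o]
      _ = 1 := h2
  have hF_sum : ∀ (c : Fin B) (j : Fin (M * T)) (ω : Fin B → Fin (M * T) → Act × Obs),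
      ∑ x : Act × Obs, F (c, j) (updB ω c j x) = 1 := by
    intro c j ω
    rw [Fintype.sum_prod_type]
    have hh : ∀ x : Act × Obs, hist c j (updB ω c j x) = hist c j ω := by
      intro x
      refine hhist c j _ _ (fun j' hj' => ?_)
      refine updB_ne ω c j x c j' ?_
      intro hcontra
      have : j' = j := congrArg Prod.snd hcontra
      rw [this] at hj'
      exact lt_irrefl _ hj'
    calc ∑ a : Act, ∑ o : Obs, F (c, j) (updB ω c j (a, o))
        = ∑ a : Act, ∑ o : Obs, π θ a (hist c j ω) * e c j (updB ω c j (a, o)) := by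
          refine Finset.sum_congr rfl fun a _ => Finset.sum_congr rfl fun o _ => ?_
          simp only [hFdef]
          rw [hh (a, o), updB_same]
      _ = ∑ a : Act, π θ a (hist c j ω) * ∑ o : Obs, e c j (updB ω c j (a, o)) := by
          refine Finset.sum_congr rfl fun a _ => ?_
          rw [Finset.mul_sum]
      _ = ∑ a : Act, π θ a (hist c j ω) := by
          refine Finset.sum_congr rfl fun a _ => ?_
          rw [he_sum' c j ω a, mul_one]
      _ = 1 := hπsum θ _
  have hcard : 0 < Fintype.card (Act × Obs) := Fintype.card_pos
  have hcardR : (Fintype.card (Act × Obs) : ℝ) ≠ 0 := by positivity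
  -- main peeling induction
  have key : ∀ (n : ℕ) (S : Finset (Fin B × Fin (M * T))), S.card ≤ n →
      (univ.filter (fun q => ρ q ≤ ρ (b, l))) ⊆ S →
      ∑ ω : Fin B → Fin (M * T) → Act × Obs, (∏ q ∈ S, F q ω) • G ω = 0 := by
    intro n
    induction n with
    | zero =>
        intro S hSc hSsub
        exfalso
        have h1 : (b, l) ∈ S := hSsub (by simp)
        have := Finset.card_pos.mpr ⟨_, h1⟩
        omega
    | succ n ih =>
        intro S hSc hSsub
        by_cases hS : S = univ.filter (fun q => ρ q ≤ ρ (b, l))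
        · -- base case: peel (b, l) itself and use the score identity
          subst hS
          have hmem : (b, l) ∈ univ.filter (fun q => ρ q ≤ ρ (b, l)) := by simp
          have hz : (Fintype.card (Act × Obs)) •
              (∑ ω : Fin B → Fin (M * T) → Act × Obs,
                (∏ q ∈ univ.filter (fun q => ρ q ≤ ρ (b, l)), F q ω) • G ω) = 0 := by
            rw [← sum_updB_fiber b l
              (fun ω => (∏ q ∈ univ.filter (fun q => ρ q ≤ ρ (b, l)), F q ω) • G ω)]
            refine Finset.sum_eq_zero fun ω _ => ?_
            have hFsplit : ∀ x : Act × Obs,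
                (∏ q ∈ univ.filter (fun q => ρ q ≤ ρ (b, l)), F q (updB ω b l x))
                = F (b, l) (updB ω b l x) *
                    ∏ q ∈ (univ.filter (fun q => ρ q ≤ ρ (b, l))).erase (b, l), F q ω := by
              intro x
              rw [← Finset.mul_prod_erase _ _ hmem]
              congr 1
              refine Finset.prod_congr rfl fun q hq => ?_
              have hq1 : q ≠ (b, l) := Finset.ne_of_mem_erase hq
              have hq2 : ρ q ≤ ρ (b, l) := by
                have := Finset.mem_of_mem_erase hq
                simp only [Finset.mem_filter, Finset.mem_univ, true_and] at this
                exact this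
              have hq3 : ρ q < ρ (b, l) := lt_of_le_of_ne hq2 (fun h => hq1 (hρinj _ _ h))
              exact hF_inv q b l ω x hq3
            have hGsplit : ∀ (a : Act) (o : Obs),
                G (updB ω b l (a, o)) = r b' l' ω •
                  fderiv ℝ (fun θ' => Real.log (π θ' a (hist b l ω))) θ := by
              intro a o
              simp only [hGdef]
              rw [hr_inv b l ω (a, o) le_rfl, hhist_inv b l ω (a, o) le_rfl, updB_same]
            have hFbl : ∀ (a : Act) (o : Obs),
                F (b, l) (updB ω b l (a, o))
                = π θ a (hist b l ω) * e b l (updB ω b l (a, o)) := by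
              intro a o
              simp only [hFdef]
              rw [hhist_inv b l ω (a, o) le_rfl, updB_same]
            rw [Fintype.sum_prod_type]
            have hstep : ∀ a : Act,
                (∑ o : Obs, (∏ q ∈ univ.filter (fun q => ρ q ≤ ρ (b, l)),
                    F q (updB ω b l (a, o))) • G (updB ω b l (a, o)))
                = ((∏ q ∈ (univ.filter (fun q => ρ q ≤ ρ (b, l))).erase (b, l), F q ω)
                    * r b' l' ω) •
                  (π θ a (hist b l ω) •
                    fderiv ℝ (fun θ' => Real.log (π θ' a (hist b l ω))) θ) := by
              intro a
              calc (∑ o : Obs, (∏ q ∈ univ.filter (fun q => ρ q ≤ ρ (b, l)),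
                      F q (updB ω b l (a, o))) • G (updB ω b l (a, o)))
                  = ∑ o : Obs, e b l (updB ω b l (a, o)) •
                      (((∏ q ∈ (univ.filter (fun q => ρ q ≤ ρ (b, l))).erase (b, l), F q ω)
                        * r b' l' ω) •
                      (π θ a (hist b l ω) •
                        fderiv ℝ (fun θ' => Real.log (π θ' a (hist b l ω))) θ)) := by
                    refine Finset.sum_congr rfl fun o _ => ?_
                    rw [hFsplit (a, o), hGsplit a o, hFbl a o]
                    rw [smul_smul, smul_smul, smul_smul]
                    congr 1
                    ring
                _ = (∑ o : Obs, e b l (updB ω b l (a, o))) •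
                      (((∏ q ∈ (univ.filter (fun q => ρ q ≤ ρ (b, l))).erase (b, l), F q ω)
                        * r b' l' ω) •
                      (π θ a (hist b l ω) •
                        fderiv ℝ (fun θ' => Real.log (π θ' a (hist b l ω))) θ)) := by
                    rw [Finset.sum_smul]
                _ = _ := by rw [he_sum' b l ω a, one_smul]
            calc ∑ a : Act, ∑ o : Obs,
                  (∏ q ∈ univ.filter (fun q => ρ q ≤ ρ (b, l)),
                    F q (updB ω b l (a, o))) • G (updB ω b l (a, o))
                = ∑ a : Act, ((∏ q ∈ (univ.filter (fun q => ρ q ≤ ρ (b, l))).erase (b, l), F q ω)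
                    * r b' l' ω) •
                  (π θ a (hist b l ω) •
                    fderiv ℝ (fun θ' => Real.log (π θ' a (hist b l ω))) θ) :=
                  Finset.sum_congr rfl fun a _ => hstep a
              _ = ((∏ q ∈ (univ.filter (fun q => ρ q ≤ ρ (b, l))).erase (b, l), F q ω)
                    * r b' l' ω) • ∑ a : Act, π θ a (hist b l ω) •
                    fderiv ℝ (fun θ' => Real.log (π θ' a (hist b l ω))) θ := by
                  rw [Finset.smul_sum]
              _ = 0 := by
                  rw [score_zero π hπpos hπdiff hπsum θ (hist b l ω), smul_zero]
          have h2 : (Fintype.card (Act × Obs) : ℝ) •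
              (∑ ω : Fin B → Fin (M * T) → Act × Obs,
                (∏ q ∈ univ.filter (fun q => ρ q ≤ ρ (b, l)), F q ω) • G ω) = 0 := by
            rw [Nat.cast_smul_eq_nsmul]
            exact hz
          rcases smul_eq_zero.mp h2 with h | h
          · exact absurd h hcardR
          · exact h
        · -- inductive step: peel the maximal position not in the core
          have hne : (S \ univ.filter (fun q => ρ q ≤ ρ (b, l))).Nonempty := by
            rw [Finset.sdiff_nonempty]
            intro hsub
            exact hS (Finset.Subset.antisymm hsub hSsub)
          obtain ⟨p, hpmem, hpmax⟩ := Finset.exists_max_image _ ρ hne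
          obtain ⟨hpS, hpnot⟩ := Finset.mem_sdiff.mp hpmem
          have hpρ : ρ (b, l) < ρ p := by
            simp only [Finset.mem_filter, Finset.mem_univ, true_and, not_le] at hpnot
            exact hpnot
          have hmax : ∀ q ∈ S, q ≠ p → ρ q < ρ p := by
            intro q hq hqp
            by_cases hqf : q ∈ univ.filter (fun q => ρ q ≤ ρ (b, l))
            · simp only [Finset.mem_filter, Finset.mem_univ, true_and] at hqf
              exact lt_of_le_of_lt hqf hpρ
            · have h1 : ρ q ≤ ρ p := hpmax q (Finset.mem_sdiff.mpr ⟨hq, hqf⟩)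
              exact lt_of_le_of_ne h1 (fun h => hqp (hρinj _ _ h))
          obtain ⟨pc, pj⟩ := p
          have hz : (Fintype.card (Act × Obs)) •
              (∑ ω : Fin B → Fin (M * T) → Act × Obs, (∏ q ∈ S, F q ω) • G ω)
              = ∑ ω : Fin B → Fin (M * T) → Act × Obs,
                  (∏ q ∈ S.erase (pc, pj), F q ω) • G ω := by
            rw [← sum_updB_fiber pc pj (fun ω => (∏ q ∈ S, F q ω) • G ω)]
            refine Finset.sum_congr rfl fun ω _ => ?_
            have hGi : ∀ x : Act × Obs, G (updB ω pc pj x) = G ω :=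
              fun x => hG_inv pc pj ω x hpρ
            have hFi : ∀ x : Act × Obs, (∏ q ∈ S, F q (updB ω pc pj x))
                = F (pc, pj) (updB ω pc pj x) * ∏ q ∈ S.erase (pc, pj), F q ω := by
              intro x
              rw [← Finset.mul_prod_erase S _ hpS]
              congr 1
              refine Finset.prod_congr rfl fun q hq => ?_
              exact hF_inv q pc pj ω x
                (hmax q (Finset.mem_of_mem_erase hq) (Finset.ne_of_mem_erase hq))
            calc ∑ x : Act × Obs, (∏ q ∈ S, F q (updB ω pc pj x)) • G (updB ω pc pj x)
                = ∑ x : Act × Obs, F (pc, pj) (updB ω pc pj x) •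
                    ((∏ q ∈ S.erase (pc, pj), F q ω) • G ω) := by
                  refine Finset.sum_congr rfl fun x _ => ?_
                  rw [hFi x, hGi x, mul_smul]
              _ = (∑ x : Act × Obs, F (pc, pj) (updB ω pc pj x)) •
                    ((∏ q ∈ S.erase (pc, pj), F q ω) • G ω) := by
                  rw [Finset.sum_smul]
              _ = (∏ q ∈ S.erase (pc, pj), F q ω) • G ω := by
                  rw [hF_sum pc pj ω, one_smul]
          have hih : ∑ ω : Fin B → Fin (M * T) → Act × Obs,
              (∏ q ∈ S.erase (pc, pj), F q ω) • G ω = 0 := by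
            refine ih (S.erase (pc, pj)) ?_ ?_
            · have := Finset.card_erase_of_mem hpS
              omega
            · intro q hq
              refine Finset.mem_erase.mpr ⟨?_, hSsub hq⟩
              intro hcontra
              simp only [Finset.mem_filter, Finset.mem_univ, true_and] at hq
              rw [hcontra] at hq
              omega
          rw [hih] at hz
          have h2 : (Fintype.card (Act × Obs) : ℝ) •
              (∑ ω : Fin B → Fin (M * T) → Act × Obs, (∏ q ∈ S, F q ω) • G ω) = 0 := by
            rw [Nat.cast_smul_eq_nsmul]
            exact hz
          rcases smul_eq_zero.mp h2 with h | h
          · exact absurd h hcardR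
          · exact h
  -- conclude
  have hfin : ∑ ω : Fin B → Fin (M * T) → Act × Obs,
      (∏ q : Fin B × Fin (M * T), F q ω) • G ω = 0 :=
    key (Finset.univ.card) Finset.univ le_rfl (Finset.subset_univ _)
  rw [← hfin]
  refine Finset.sum_congr rfl fun ω _ => ?_
  have h1 : (∏ q : Fin B × Fin (M * T), F q ω)
      = ∏ bb, ∏ ll, π θ ((ω bb ll).1) (hist bb ll ω) * e bb ll ω := by
    rw [Fintype.prod_prod_type]
  rw [← h1, mul_smul]

/-- Unbiasedness of COALA-PG in the batched setting.  A batched trajectory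
`ω : Fin B → Fin (M*T) → Act × Obs` consists of `B` parallel trajectories of `M` inner
episodes of length `T` (step `l` belongs to inner episode `l/T`).  The joint density is
`P θ ω = ∏_b ∏_l π_θ(a_l^b | h_l^b) · e_l^b(ω)`, where the history `h_l^b` depends only
on trajectory `b`'s own strict prefix, and the environment factors `e` (independent of
`θ`, normalized over the next observation) let trajectories interact only through
earlier inner episodes (parameter updates at episode boundaries).  Rewards `r_l^b`
depend only on trajectory `b`'s own steps up to `l` and on all trajectories' steps in
strictly earlier episodes.  Then the COALA-PG estimator, which pairs each score
`∇_θ log π_θ(a_l^b | h_l^b)` with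
`(1/B)·Σ_{l'≥l, same episode} r_{l'}^b + (1/B)·Σ_{b'} Σ_{l' in later episodes} r_{l'}^{b'}`,
has the same expectation as the full estimator pairing the score with
`(1/B)·Σ_{b'} Σ_{l'≥l} r_{l'}^{b'}`: dropping the cross-trajectory reward terms within
the current inner episode does not change the expectation. -/
theorem coala_pg_unbiased
    {Act Obs : Type*} [Fintype Act] [Fintype Obs] {d B M T : ℕ}
    (hB : 1 ≤ B) (hM : 1 ≤ M) (hT : 1 ≤ T)
    (hist : Fin B → Fin (M * T) → (Fin B → Fin (M * T) → Act × Obs) →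
      (Fin (M * T) → Option (Act × Obs)))
    (hhist : ∀ b l ω ω', (∀ l' : Fin (M * T), l' < l → ω b l' = ω' b l') →
      hist b l ω = hist b l ω')
    (π : (Fin d → ℝ) → Act → (Fin (M * T) → Option (Act × Obs)) → ℝ)
    (hπpos : ∀ θ a h, 0 < π θ a h)
    (hπdiff : ∀ a h, Differentiable ℝ (fun θ => π θ a h))
    (hπsum : ∀ θ h, ∑ a : Act, π θ a h = 1)
    (e : Fin B → Fin (M * T) → (Fin B → Fin (M * T) → Act × Obs) → ℝ)
    (he_nn : ∀ b l ω, 0 ≤ e b l ω)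
    (he_dep : ∀ b l ω ω',
      (∀ l' : Fin (M * T), l' ≤ l → ω b l' = ω' b l') →
      (∀ (b' : Fin B) (l' : Fin (M * T)), l'.val / T < l.val / T → ω b' l' = ω' b' l') →
      e b l ω = e b l ω')
    (he_sum : ∀ b l (ω : Fin B → Fin (M * T) → Act × Obs), ∑ o : Obs,
      e b l (Function.update ω b (Function.update (ω b) l ((ω b l).1, o))) = 1)
    (P : (Fin d → ℝ) → (Fin B → Fin (M * T) → Act × Obs) → ℝ)
    (hP : ∀ θ ω, P θ ω = ∏ b, ∏ l, π θ ((ω b l).1) (hist b l ω) * e b l ω)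
    (r : Fin B → Fin (M * T) → (Fin B → Fin (M * T) → Act × Obs) → ℝ)
    (hr_dep : ∀ b l ω ω',
      (∀ l' : Fin (M * T), l' ≤ l → ω b l' = ω' b l') →
      (∀ (b' : Fin B) (l' : Fin (M * T)), l'.val / T < l.val / T → ω b' l' = ω' b' l') →
      r b l ω = r b l ω')
    (θ : Fin d → ℝ) :
    ∑ ω : Fin B → Fin (M * T) → Act × Obs, P θ ω •
      ∑ b, ∑ l,
        (((B : ℝ)⁻¹ * ∑ l' ∈ univ.filter
              (fun l' : Fin (M * T) => l ≤ l' ∧ l'.val / T = l.val / T), r b l' ω)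
          + (B : ℝ)⁻¹ * ∑ b', ∑ l' ∈ univ.filter
              (fun l' : Fin (M * T) => l.val / T < l'.val / T), r b' l' ω) •
          fderiv ℝ (fun θ' => Real.log (π θ' ((ω b l).1) (hist b l ω))) θ
    = ∑ ω : Fin B → Fin (M * T) → Act × Obs, P θ ω •
        ∑ b, ∑ l,
          ((B : ℝ)⁻¹ * ∑ b', ∑ l' ∈ univ.filter
              (fun l' : Fin (M * T) => l ≤ l'), r b' l' ω) •
            fderiv ℝ (fun θ' => Real.log (π θ' ((ω b l).1) (hist b l ω))) θ := by
  classical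
  rcases isEmpty_or_nonempty Act with hAct | hAct
  · haveI := hAct
    have h1 := hπsum θ (fun _ => none)
    rw [Finset.univ_eq_empty, Finset.sum_empty] at h1
    exact absurd h1 zero_ne_one
  rcases isEmpty_or_nonempty Obs with hObs | hObs
  · have hMT : 0 < M * T := Nat.mul_pos hM hT
    haveI : IsEmpty (Fin B → Fin (M * T) → Act × Obs) :=
      ⟨fun f => hObs.false (f ⟨0, hB⟩ ⟨0, hMT⟩).2⟩
    rw [Finset.univ_eq_empty, Finset.sum_empty, Finset.sum_empty]
  haveI := hAct
  haveI := hObs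
  have hT0 : 0 < T := hT
  -- splitting the future into "same episode" and "later episodes"
  have hfilt : ∀ l : Fin (M * T),
      (univ.filter (fun l' : Fin (M * T) => l ≤ l'))
      = (univ.filter (fun l' : Fin (M * T) => l ≤ l' ∧ l'.val / T = l.val / T))
        ∪ (univ.filter (fun l' : Fin (M * T) => l.val / T < l'.val / T)) := by
    intro l
    ext l'
    simp only [Finset.mem_union, Finset.mem_filter, Finset.mem_univ, true_and]
    constructor
    · intro h
      rcases eq_or_lt_of_le (Nat.div_le_div_right (Fin.le_def.mp h) : l.val / T ≤ l'.val / T) with he | hlt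
      · exact Or.inl ⟨h, he.symm⟩
      · exact Or.inr hlt
    · rintro (⟨h1, _⟩ | h)
      · exact h1
      · have h2 : l.val ≤ l'.val := by
          by_contra hcon
          push_neg at hcon
          have h3 := (Nat.div_le_div_right (le_of_lt hcon) : l'.val / T ≤ l.val / T)
          exact absurd h (not_lt.mpr h3)
        exact Fin.le_def.mpr h2
  have hdisj : ∀ l : Fin (M * T),
      Disjoint (univ.filter (fun l' : Fin (M * T) => l ≤ l' ∧ l'.val / T = l.val / T))
        (univ.filter (fun l' : Fin (M * T) => l.val / T < l'.val / T)) := by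
    intro l
    refine Finset.disjoint_left.mpr fun l' h1 h2 => ?_
    simp only [Finset.mem_filter, Finset.mem_univ, true_and] at h1 h2
    rw [h1.2] at h2
    exact lt_irrefl _ h2
  have hsum_split : ∀ (ω : Fin B → Fin (M * T) → Act × Obs) (b'' : Fin B) (l : Fin (M * T)),
      ∑ l' ∈ univ.filter (fun l' : Fin (M * T) => l ≤ l'), r b'' l' ω
      = (∑ l' ∈ univ.filter (fun l' : Fin (M * T) => l ≤ l' ∧ l'.val / T = l.val / T),
          r b'' l' ω)
        + ∑ l' ∈ univ.filter (fun l' : Fin (M * T) => l.val / T < l'.val / T), r b'' l' ω := by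
    intro ω b'' l
    rw [hfilt l, Finset.sum_union (hdisj l)]
  -- per-(ω, b, l) decomposition of the full estimator's coefficient
  have hper : ∀ (ω : Fin B → Fin (M * T) → Act × Obs) (bb : Fin B) (l : Fin (M * T)),
      ((B : ℝ)⁻¹ * ∑ b'', ∑ l' ∈ univ.filter (fun l' : Fin (M * T) => l ≤ l'), r b'' l' ω) •
          fderiv ℝ (fun θ' => Real.log (π θ' ((ω bb l).1) (hist bb l ω))) θ
      = (((B : ℝ)⁻¹ * ∑ l' ∈ univ.filter
              (fun l' : Fin (M * T) => l ≤ l' ∧ l'.val / T = l.val / T), r bb l' ω)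
          + (B : ℝ)⁻¹ * ∑ b'', ∑ l' ∈ univ.filter
              (fun l' : Fin (M * T) => l.val / T < l'.val / T), r b'' l' ω) •
          fderiv ℝ (fun θ' => Real.log (π θ' ((ω bb l).1) (hist bb l ω))) θ
        + ∑ b'' ∈ univ.erase bb, ∑ l' ∈ univ.filter
              (fun l' : Fin (M * T) => l ≤ l' ∧ l'.val / T = l.val / T),
            ((B : ℝ)⁻¹ * r b'' l' ω) •
              fderiv ℝ (fun θ' => Real.log (π θ' ((ω bb l).1) (hist bb l ω))) θ := by
    intro ω bb l
    have hscal : (B : ℝ)⁻¹ * ∑ b'', ∑ l' ∈ univ.filter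
            (fun l' : Fin (M * T) => l ≤ l'), r b'' l' ω
        = (((B : ℝ)⁻¹ * ∑ l' ∈ univ.filter
              (fun l' : Fin (M * T) => l ≤ l' ∧ l'.val / T = l.val / T), r bb l' ω)
          + (B : ℝ)⁻¹ * ∑ b'', ∑ l' ∈ univ.filter
              (fun l' : Fin (M * T) => l.val / T < l'.val / T), r b'' l' ω)
          + ∑ b'' ∈ univ.erase bb, ∑ l' ∈ univ.filter
              (fun l' : Fin (M * T) => l ≤ l' ∧ l'.val / T = l.val / T),
            (B : ℝ)⁻¹ * r b'' l' ω := by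
      simp only [hsum_split ω]
      rw [Finset.sum_add_distrib]
      rw [← Finset.add_sum_erase univ (fun b'' => ∑ l' ∈ univ.filter
            (fun l' : Fin (M * T) => l ≤ l' ∧ l'.val / T = l.val / T), r b'' l' ω)
          (Finset.mem_univ bb)]
      simp only [← Finset.mul_sum]
      ring
    rw [hscal, add_smul, Finset.sum_smul]
    congr 1
    refine Finset.sum_congr rfl fun b'' _ => ?_
    rw [Finset.sum_smul]
  -- the cross-trajectory same-episode terms have zero expectation
  have hzero : ∑ ω : Fin B → Fin (M * T) → Act × Obs, ∑ b, ∑ l,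
      ∑ b'' ∈ univ.erase b, ∑ l' ∈ univ.filter
          (fun l' : Fin (M * T) => l ≤ l' ∧ l'.val / T = l.val / T),
        (P θ ω * ((B : ℝ)⁻¹ * r b'' l' ω)) •
          fderiv ℝ (fun θ' => Real.log (π θ' ((ω b l).1) (hist b l ω))) θ = 0 := by
    rw [Finset.sum_comm]
    refine Finset.sum_eq_zero fun b _ => ?_
    rw [Finset.sum_comm]
    refine Finset.sum_eq_zero fun l _ => ?_
    rw [Finset.sum_comm]
    refine Finset.sum_eq_zero fun b'' hb'' => ?_
    rw [Finset.sum_comm]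
    refine Finset.sum_eq_zero fun l' hl' => ?_
    simp only [Finset.mem_filter, Finset.mem_univ, true_and] at hl'
    have hb2 : b'' ≠ b := Finset.ne_of_mem_erase hb''
    have h0 : ∑ ω : Fin B → Fin (M * T) → Act × Obs,
        ((∏ bbb, ∏ lll, π θ ((ω bbb lll).1) (hist bbb lll ω) * e bbb lll ω) * r b'' l' ω) •
          fderiv ℝ (fun θ' => Real.log (π θ' ((ω b l).1) (hist b l ω))) θ = 0 :=
      coala_core hT hist hhist π hπpos hπdiff hπsum e he_dep he_sum r hr_dep θ b b'' l l'
        hb2 hl'.1 hl'.2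
    calc ∑ ω : Fin B → Fin (M * T) → Act × Obs,
          (P θ ω * ((B : ℝ)⁻¹ * r b'' l' ω)) •
            fderiv ℝ (fun θ' => Real.log (π θ' ((ω b l).1) (hist b l ω))) θ
        = ∑ ω : Fin B → Fin (M * T) → Act × Obs, (B : ℝ)⁻¹ •
            (((∏ bbb, ∏ lll, π θ ((ω bbb lll).1) (hist bbb lll ω) * e bbb lll ω)
                * r b'' l' ω) •
              fderiv ℝ (fun θ' => Real.log (π θ' ((ω b l).1) (hist b l ω))) θ) := by
          refine Finset.sum_congr rfl fun ω _ => ?_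
          rw [hP θ ω, mul_left_comm, ← smul_smul]
      _ = (B : ℝ)⁻¹ • ∑ ω : Fin B → Fin (M * T) → Act × Obs,
            ((∏ bbb, ∏ lll, π θ ((ω bbb lll).1) (hist bbb lll ω) * e bbb lll ω)
                * r b'' l' ω) •
              fderiv ℝ (fun θ' => Real.log (π θ' ((ω b l).1) (hist b l ω))) θ := by
          rw [Finset.smul_sum]
      _ = 0 := by rw [h0, smul_zero]
  -- put everything together
  have hfull : ∑ ω : Fin B → Fin (M * T) → Act × Obs, P θ ω •
        ∑ b, ∑ l,
          ((B : ℝ)⁻¹ * ∑ b', ∑ l' ∈ univ.filter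
              (fun l' : Fin (M * T) => l ≤ l'), r b' l' ω) •
            fderiv ℝ (fun θ' => Real.log (π θ' ((ω b l).1) (hist b l ω))) θ
      = (∑ ω : Fin B → Fin (M * T) → Act × Obs, P θ ω •
          ∑ b, ∑ l,
            (((B : ℝ)⁻¹ * ∑ l' ∈ univ.filter
                  (fun l' : Fin (M * T) => l ≤ l' ∧ l'.val / T = l.val / T), r b l' ω)
              + (B : ℝ)⁻¹ * ∑ b', ∑ l' ∈ univ.filter
                  (fun l' : Fin (M * T) => l.val / T < l'.val / T), r b' l' ω) •
              fderiv ℝ (fun θ' => Real.log (π θ' ((ω b l).1) (hist b l ω))) θ)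
        + ∑ ω : Fin B → Fin (M * T) → Act × Obs, ∑ b, ∑ l,
            ∑ b'' ∈ univ.erase b, ∑ l' ∈ univ.filter
                (fun l' : Fin (M * T) => l ≤ l' ∧ l'.val / T = l.val / T),
              (P θ ω * ((B : ℝ)⁻¹ * r b'' l' ω)) •
                fderiv ℝ (fun θ' => Real.log (π θ' ((ω b l).1) (hist b l ω))) θ := by
    rw [← Finset.sum_add_distrib]
    refine Finset.sum_congr rfl fun ω _ => ?_
    simp only [hper ω, Finset.sum_add_distrib, smul_add, Finset.smul_sum, smul_smul]
  rw [hfull, hzero, add_zero]
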